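/- Let a, b be real numbers, and let M be the 3×3 real matrix whose rows are (1+a, 1+a, 1+a), (1−b, 1−b, 1−b), (b−a, b−a, b−a). If (1+a)(1−b)(b−a) ≠ 0, (1+a)(1−b)(2+a−b) < 0 and (b−a)(2+a−b) < 0, then the evolution algebra E_M is isomorphic to the evolution algebra E₉ whose structure matrix has rows (1,0,0), (−1,0,0), (−1,0,0). -/

import Mathlib

/-- Evolution algebra multiplication on ℝ³ determined by a structure matrix `A`:
`(x ∗_A y) j = ∑ i, x i * y i * A i j`. -/
def evolMul (A : Matrix (Fin 3) (Fin 3) ℝ) (x y : Fin 3 → ℝ) : Fin 3 → ℝ :=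
  fun j => ∑ i, x i * y i * A i j

/-- The evolution algebras with structure matrices `A` and `B` are isomorphic:
there is an ℝ-linear equivalence of ℝ³ intertwining the two multiplications. -/
def EvolIso (A B : Matrix (Fin 3) (Fin 3) ℝ) : Prop :=
  ∃ f : (Fin 3 → ℝ) ≃ₗ[ℝ] (Fin 3 → ℝ),
    ∀ x y, f (evolMul A x y) = evolMul B (f x) (f y)

theorem stmt (a b : ℝ)
    (h1 : (1 + a) * (1 - b) * (b - a) ≠ 0)
    (h2 : (1 + a) * (1 - b) * (2 + a - b) < 0)
    (h3 : (b - a) * (2 + a - b) < 0) :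
    EvolIso (!![1 + a, 1 + a, 1 + a; 1 - b, 1 - b, 1 - b; b - a, b - a, b - a] : Matrix (Fin 3) (Fin 3) ℝ) (!![1, 0, 0; -1, 0, 0; -1, 0, 0] : Matrix (Fin 3) (Fin 3) ℝ) := by
  have hsum : 2 + a - b ≠ 0 := by
    intro h; rw [h, mul_zero] at h3; exact lt_irrefl 0 h3
  have hD : 0 < 2 * ((1 + a) * ((1 - b) * (b - a))) := by
    nlinarith [mul_pos (neg_pos.mpr h2) (neg_pos.mpr h3), sq_nonneg (2 + a - b),
      mul_self_nonneg (2 + a - b)]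
  have hg : 0 < (1 + a) * ((1 + a) - 2) := by
    rcases lt_trichotomy (2 + a - b) 0 with hc | hc | hc
    · -- 2+a-b < 0 : b-a > 0, (1+a)(1-b) > 0, both 1+a,1-b negative
      have hba : 0 < b - a := by nlinarith
      have h12 : 0 < (1 + a) * (1 - b) := by nlinarith
      have h1a : 1 + a < 0 := by nlinarith
      nlinarith
    · exact absurd hc hsum
    · have hba : b - a < 0 := by nlinarith
      have h12 : (1 + a) * (1 - b) < 0 := by nlinarith
      rcases lt_trichotomy (1 + a) 0 with h1a | h1a | h1a
      · nlinarith
      · exact absurd (by rw [h1a]; ring) h1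
      · have h1b : 1 - b < 0 := by nlinarith
        nlinarith
  set s : ℝ := Real.sqrt ((1 + a) * ((1 + a) - 2)) with hs
  set t : ℝ := Real.sqrt (2 * ((1 + a) * ((1 - b) * (b - a)))) with ht
  have hs2 : s * s = (1 + a) * ((1 + a) - 2) := Real.mul_self_sqrt hg.le
  have ht2 : t * t = 2 * ((1 + a) * ((1 - b) * (b - a))) := Real.mul_self_sqrt hD.le
  have hs0 : s ≠ 0 := by
    intro h; rw [h, mul_zero] at hs2; exact absurd hs2.symm (ne_of_gt hg)
  have ht0 : t ≠ 0 := by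
    intro h; rw [h, mul_zero] at ht2; exact absurd ht2.symm (ne_of_gt hD)
  set P : Matrix (Fin 3) (Fin 3) ℝ :=
    !![1 + a, 1 - b, b - a;
       s, (1 + a) * (1 - b) / s, (1 + a) * (b - a) / s;
       0, t / s, -(t / s)] with hP
  have hdet : P.det = 2 * t := by
    rw [hP]
    simp [Matrix.det_fin_three]
    field_simp
    linear_combination (-(1 + a)) * hs2
  have hdet0 : IsUnit P.det := by
    rw [hdet]
    exact (mul_ne_zero two_ne_zero ht0).isUnit
  have hinv : Invertible P := P.invertibleOfIsUnitDet hdet0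
  refine ⟨P.toLinearEquiv' hinv, fun x y => ?_⟩
  have happ : ∀ z : Fin 3 → ℝ, P.toLinearEquiv' hinv z = P.mulVec z := fun z => by
    rw [show (P.toLinearEquiv' hinv) z = Matrix.toLin' P z from rfl, Matrix.toLin'_apply]
  rw [happ, happ, happ]
  funext j
  fin_cases j
  · simp [evolMul, Matrix.mulVec, dotProduct, Fin.sum_univ_three, hP, Matrix.vecHead, Matrix.vecTail]
    field_simp
    linear_combination (x 1*y 1 + s*s*x 0*y 0 + (2:ℝ)*b*x 2*y 2 + (-1:ℝ)*b*x 2*y 1 + (-1:ℝ)*b*x 1*y 2 + (-1:ℝ)*b*b*x 2*y 2 + b*b*x 2*y 1 + b*b*x 1*y 2 + (-1:ℝ)*b*b*x 1*y 1 + (-2:ℝ)*a*x 2*y 2 + a*x 2*y 1 + a*x 1*y 2 + (2:ℝ)*a*b*x 2*y 2 + (-1:ℝ)*a*b*x 2*y 1 + (-1:ℝ)*a*b*x 1*y 2 + (-1:ℝ)*a*a*x 2*y 2) * hs2 + (x 2*y 2 + (-1:ℝ)*x 2*y 1 + (-1:ℝ)*x 1*y 2 + x 1*y 1) * ht2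
  · simp [evolMul, Matrix.mulVec, dotProduct, Fin.sum_univ_three, hP, Matrix.vecHead, Matrix.vecTail]
    field_simp
    linear_combination (x 0*y 0*(1+a) + x 1*y 1*(1-b) + x 2*y 2*(b-a)) * hs2
  · simp [evolMul, Matrix.mulVec, dotProduct, Fin.sum_univ_three, hP, Matrix.vecHead, Matrix.vecTail]
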